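/- arXiv:1209.0736 — 5 statements merged into one kernel-verified Lean document; each statement's English description precedes it below -/
import Mathlib

section
/- With B and B* as defined, B · B* equals the W×W identity matrix; consequently B is invertible and B⁻¹ = B*. -/
open Finset in
lemma alt_sum_real (n : ℕ) :
    ∑ k ∈ range (n+1), (-1:ℝ)^(n-k) * ((n.choose k : ℕ) : ℝ) = if n = 0 then 1 else 0 := by
  have h2 : ∑ k ∈ range (n+1), (-1:ℝ)^k * ((n.choose k : ℕ) : ℝ)
      = if n = 0 then 1 else 0 := by
    have h := congrArg (fun z : ℤ => (z : ℝ)) (@Int.alternating_sum_range_choose n)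
    push_cast at h
    convert h using 2 <;> simp
  calc ∑ k ∈ range (n+1), (-1:ℝ)^(n-k) * ((n.choose k : ℕ) : ℝ)
      = ∑ k ∈ range (n+1), (-1:ℝ)^k * ((n.choose k : ℕ) : ℝ) := by
        rw [← Finset.sum_range_reflect]
        apply Finset.sum_congr rfl
        intro k hk
        simp only [Finset.mem_range] at hk
        have hk' : k ≤ n := by omega
        have e1 : n + 1 - 1 - k = n - k := by omega
        have e2 : n - (n - k) = k := by omega
        rw [e1, e2, Nat.choose_symm hk']
    _ = if n = 0 then 1 else 0 := h2

open Finset in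
lemma main_sum (p q : ℝ) (hp : p ≠ 0) (hD : ∀ n : ℕ, (1:ℝ) - q ^ (n+1) ≠ 0)
    (W j i : ℕ) (hji : j ≤ i) (hiW : i < W) :
    (∑ k ∈ Finset.range W,
      (if j ≤ k then (((k+1).choose (j+1) : ℕ) : ℝ) * p^(j+1) * q^(k-j) / (1 - q^(k+1)) else 0) *
      (if k ≤ i then (((i+1).choose (k+1) : ℕ) : ℝ) * (-q)^(i-k) * (1 - q^(k+1)) / p^(i+1) else 0))
    = if j = i then 1 else 0 := by
  set c : ℝ := (((i+1).choose (j+1) : ℕ) : ℝ) * q^(i-j) * p^(j+1) / p^(i+1) with hc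
  have hP : p^(i+1) ≠ 0 := pow_ne_zero _ hp
  have hstep : ∀ k, j ≤ k → k ≤ i →
      ((((k+1).choose (j+1) : ℕ) : ℝ) * p^(j+1) * q^(k-j) / (1 - q^(k+1))) *
      ((((i+1).choose (k+1) : ℕ) : ℝ) * (-q)^(i-k) * (1 - q^(k+1)) / p^(i+1))
      = c * ((-1:ℝ)^(i-j-(k-j)) * (((i-j).choose (k-j) : ℕ) : ℝ)) := by
    intro k hjk hki
    have hab : ((((k+1).choose (j+1) : ℕ) : ℝ)) * (((i+1).choose (k+1) : ℕ) : ℝ)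
        = (((i+1).choose (j+1) : ℕ) : ℝ) * (((i-j).choose (k-j) : ℕ) : ℝ) := by
      have hcc := Nat.choose_mul (n := i+1) (k := k+1) (s := j+1) (by omega)
      simp only [Nat.succ_sub_succ] at hcc
      calc ((((k+1).choose (j+1) : ℕ) : ℝ)) * (((i+1).choose (k+1) : ℕ) : ℝ)
          = ((((i+1).choose (k+1)) * ((k+1).choose (j+1)) : ℕ) : ℝ) := by
            push_cast; ring
        _ = ((((i+1).choose (j+1)) * ((i-j).choose (k-j)) : ℕ) : ℝ) := by rw [hcc]
        _ = _ := by push_cast; ring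
    have hD' := hD k
    have hneg : (-q)^(i-k) = (-1:ℝ)^(i-k) * q^(i-k) := by rw [neg_pow]
    have hqq : q^(k-j) * q^(i-k) = q^(i-j) := by
      rw [← pow_add]; congr 1; omega
    have hik : i - j - (k - j) = i - k := by omega
    rw [hik, hneg, div_mul_div_comm]
    have hnum : (((k+1).choose (j+1) : ℕ) : ℝ) * p^(j+1) * q^(k-j) *
          ((((i+1).choose (k+1) : ℕ) : ℝ) * ((-1:ℝ)^(i-k) * q^(i-k)) * (1 - q^(k+1)))
        = ((1 - q^(k+1))) * ((((i+1).choose (j+1) : ℕ) : ℝ) * q^(i-j) * p^(j+1) *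
            ((-1:ℝ)^(i-k) * (((i-j).choose (k-j) : ℕ) : ℝ))) := by
      calc _ = ((((k+1).choose (j+1) : ℕ) : ℝ) * (((i+1).choose (k+1) : ℕ) : ℝ)) *
            (q^(k-j) * q^(i-k)) * p^(j+1) * (-1:ℝ)^(i-k) * (1 - q^(k+1)) := by ring
        _ = _ := by rw [hab, hqq]; ring
    rw [hnum, mul_div_mul_left _ _ hD', hc]
    ring
  have hrestrict : (∑ k ∈ Finset.range W,
      (if j ≤ k then (((k+1).choose (j+1) : ℕ) : ℝ) * p^(j+1) * q^(k-j) / (1 - q^(k+1)) else 0) *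
      (if k ≤ i then (((i+1).choose (k+1) : ℕ) : ℝ) * (-q)^(i-k) * (1 - q^(k+1)) / p^(i+1) else 0))
      = ∑ k ∈ Finset.Icc j i, c * ((-1:ℝ)^(i-j-(k-j)) * (((i-j).choose (k-j) : ℕ) : ℝ)) := by
    rw [← Finset.sum_subset (s₁ := Finset.Icc j i) (s₂ := Finset.range W)
      (by intro k hk; simp only [Finset.mem_Icc] at hk; simp only [Finset.mem_range]; omega)
      (by
        intro k _ hk
        simp only [Finset.mem_Icc, not_and_or, not_le] at hk
        rcases hk with h | h
        · rw [if_neg (show ¬ j ≤ k by omega)]; ring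
        · rw [if_neg (show ¬ k ≤ i by omega)]; ring)]
    apply Finset.sum_congr rfl
    intro k hk
    simp only [Finset.mem_Icc] at hk
    rw [if_pos hk.1, if_pos hk.2, hstep k hk.1 hk.2]
  rw [hrestrict, ← Finset.mul_sum]
  have hsum : (∑ k ∈ Finset.Icc j i, (-1:ℝ)^(i-j-(k-j)) * (((i-j).choose (k-j) : ℕ) : ℝ))
      = if i - j = 0 then 1 else 0 := by
    rw [← Finset.Ico_add_one_right_eq_Icc, Finset.sum_Ico_eq_sum_range]
    have he : i + 1 - j = (i - j) + 1 := by omega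
    rw [he]
    rw [← alt_sum_real (i - j)]
    apply Finset.sum_congr rfl
    intro m _
    have e1 : j + m - j = m := by omega
    rw [e1]
  rw [hsum]
  by_cases h : j = i
  · subst h
    rw [if_pos (by omega), if_pos rfl, mul_one, hc]
    simp [Nat.choose_self, div_self hP]
  · rw [if_neg (by omega), if_neg h, mul_zero]

/-- With `B` and `B*` as defined, `B · B*` equals the `W×W` identity matrix; consequently
`B` is invertible and `B⁻¹ = B*`. Indices `j, i` range over `1,…,W`; the `Fin W` index `j`
corresponds to the mathematical index `j+1`. -/
theorem stmt_0 (W : ℕ) (hW : 1 ≤ W) (p q : ℝ) (hp0 : 0 < p) (hp1 : p < 1) (hq : q = 1 - p)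
    (B Bs : Matrix (Fin W) (Fin W) ℝ)
    (hB : ∀ j i : Fin W, B j i =
      if (j : ℕ) ≤ (i : ℕ) then
        (((i : ℕ) + 1).choose ((j : ℕ) + 1) : ℝ) * p ^ ((j : ℕ) + 1) * q ^ ((i : ℕ) - (j : ℕ))
          / (1 - q ^ ((i : ℕ) + 1))
      else 0)
    (hBs : ∀ j i : Fin W, Bs j i =
      if (j : ℕ) ≤ (i : ℕ) then
        (((i : ℕ) + 1).choose ((j : ℕ) + 1) : ℝ) * (-q) ^ ((i : ℕ) - (j : ℕ))
          * (1 - q ^ ((j : ℕ) + 1)) / p ^ ((i : ℕ) + 1)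
      else 0) :
    B * Bs = 1 ∧ IsUnit B ∧ B⁻¹ = Bs := by
  have hq0 : 0 < q := by simp [hq]; linarith
  have hq1 : q < 1 := by simp [hq]; linarith
  have hp : p ≠ 0 := ne_of_gt hp0
  have hD : ∀ n : ℕ, (1:ℝ) - q ^ (n+1) ≠ 0 := by
    intro n
    have : q ^ (n+1) < 1 := pow_lt_one₀ (le_of_lt hq0) hq1 (Nat.succ_ne_zero n)
    linarith
  have key : B * Bs = 1 := by
    ext j i
    rw [Matrix.mul_apply, Matrix.one_apply]
    by_cases hji : (j : ℕ) ≤ (i : ℕ)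
    · have := main_sum p q hp hD W (j : ℕ) (i : ℕ) hji i.isLt
      rw [← Fin.sum_univ_eq_sum_range (fun k =>
        (if (j:ℕ) ≤ k then (((k+1).choose ((j:ℕ)+1) : ℕ) : ℝ) * p^((j:ℕ)+1) * q^(k-(j:ℕ)) / (1 - q^(k+1)) else 0) *
        (if k ≤ (i:ℕ) then ((((i:ℕ)+1).choose (k+1) : ℕ) : ℝ) * (-q)^((i:ℕ)-k) * (1 - q^(k+1)) / p^((i:ℕ)+1) else 0)) W] at this
      have heq : ∀ k : Fin W, B j k * Bs k i =
        (if (j:ℕ) ≤ (k:ℕ) then ((((k:ℕ)+1).choose ((j:ℕ)+1) : ℕ) : ℝ) * p^((j:ℕ)+1) * q^((k:ℕ)-(j:ℕ)) / (1 - q^((k:ℕ)+1)) else 0) *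
        (if (k:ℕ) ≤ (i:ℕ) then ((((i:ℕ)+1).choose ((k:ℕ)+1) : ℕ) : ℝ) * (-q)^((i:ℕ)-(k:ℕ)) * (1 - q^((k:ℕ)+1)) / p^((i:ℕ)+1) else 0) := by
        intro k; rw [hB, hBs]
      rw [Finset.sum_congr rfl (fun k _ => heq k), this]
      by_cases h : j = i
      · rw [if_pos h, if_pos (by rw [h])]
      · rw [if_neg h, if_neg (fun hh => h (Fin.ext hh))]
    · rw [if_neg (fun hh : j = i => hji (by rw [hh]))]
      apply Finset.sum_eq_zero
      intro k _
      rw [hB, hBs]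
      by_cases h1 : (j:ℕ) ≤ (k:ℕ)
      · rw [if_neg (show ¬ (k:ℕ) ≤ (i:ℕ) by omega)]; ring
      · rw [if_neg h1]; ring
  exact ⟨key, (Matrix.isUnit_iff_isUnit_det B).mpr (Matrix.isUnit_det_of_right_inverse key), Matrix.inv_eq_right_inv key⟩
end

section
/- For all integers i, j ≥ 0 and every real x > 0, ∑_{k=0}^{j} C(i+k,i) C(j,k) x^{k+i} = (x^i / i!) ∑_{k=0}^{min(i,j)} C(i,k) (1+x)^{j−k} x^k · (j!/(j−k)!) · (i!/k!). -/
open Finset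

-- Vandermonde, extended to range (j+1)
lemma vand (i n j : ℕ) (hn : n ≤ j) :
    (i + n).choose i = ∑ k ∈ range (j + 1), i.choose k * n.choose k := by
  have h1 : (i + n).choose i = ∑ k ∈ range (n + 1), i.choose k * n.choose k := by
    rw [Nat.choose_symm_add, Nat.add_choose_eq,
      Finset.Nat.sum_antidiagonal_eq_sum_range_succ_mk]
    refine sum_congr rfl fun k hk => ?_
    have hk' : k ≤ n := by simpa using Nat.lt_succ_iff.mp (mem_range.mp hk)
    rw [Nat.choose_symm hk']
  rw [h1]
  apply Finset.sum_subset (by intro a ha; simp at *; omega)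
  intro k hk hk'
  simp only [mem_range] at hk hk'
  rw [Nat.choose_eq_zero_of_lt (by omega : n < k), Nat.mul_zero]

-- inner sum identity
lemma inner (j k : ℕ) (hk : k ≤ j) (x : ℝ) :
    ∑ n ∈ range (j + 1), ((n.choose k : ℝ) * (j.choose n : ℝ)) * x ^ n
      = (j.choose k : ℝ) * x ^ k * (1 + x) ^ (j - k) := by
  have hsub : ∑ n ∈ range (j + 1), ((n.choose k : ℝ) * (j.choose n : ℝ)) * x ^ n
      = ∑ n ∈ Ico k (j + 1), ((n.choose k : ℝ) * (j.choose n : ℝ)) * x ^ n := by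
    refine (Finset.sum_subset (by intro a ha; simp at *; omega) ?_).symm
    intro n hn hn'
    simp only [mem_range, mem_Ico] at hn hn'
    rw [Nat.choose_eq_zero_of_lt (by omega : n < k)]
    push_cast; ring
  rw [hsub, Finset.sum_Ico_eq_sum_range]
  have hrange : j + 1 - k = j - k + 1 := by omega
  rw [hrange, add_comm 1 x, add_pow]
  rw [Finset.mul_sum]
  refine sum_congr rfl fun m hm => ?_
  simp only [mem_range] at hm
  have hkm : k + m ≤ j := by omega
  have htri : j.choose (k + m) * (k + m).choose k = j.choose k * (j - k).choose m := by
    have := Nat.choose_mul (n := j) (k := k + m) (s := k) (Nat.le_add_right k m)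
    simpa using this
  have : ((k + m).choose k : ℝ) * (j.choose (k + m) : ℝ) = (j.choose k : ℝ) * ((j - k).choose m : ℝ) := by
    rw [mul_comm]; exact_mod_cast congrArg (Nat.cast : ℕ → ℝ) htri
  rw [this, one_pow, pow_add]
  ring

lemma main (i j : ℕ) (x : ℝ) :
    ∑ n ∈ range (j + 1), ((i + n).choose i : ℝ) * (j.choose n : ℝ) * x ^ n
      = ∑ k ∈ range (j + 1), ((i.choose k : ℝ) * (j.choose k : ℝ)) * x ^ k * (1 + x) ^ (j - k) := by
  calc ∑ n ∈ range (j + 1), ((i + n).choose i : ℝ) * (j.choose n : ℝ) * x ^ n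
      = ∑ n ∈ range (j + 1), ∑ k ∈ range (j + 1),
          (i.choose k : ℝ) * (((n.choose k : ℝ) * (j.choose n : ℝ)) * x ^ n) := by
        refine sum_congr rfl fun n hn => ?_
        simp only [mem_range] at hn
        rw [vand i n j (by omega)]
        push_cast
        rw [Finset.sum_mul, Finset.sum_mul]
        refine sum_congr rfl fun k _ => by ring
    _ = ∑ k ∈ range (j + 1), (i.choose k : ℝ) *
          ∑ n ∈ range (j + 1), ((n.choose k : ℝ) * (j.choose n : ℝ)) * x ^ n := by
        rw [Finset.sum_comm]
        exact sum_congr rfl fun k _ => (Finset.mul_sum _ _ _).symm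
    _ = _ := by
        refine sum_congr rfl fun k hk => ?_
        simp only [mem_range] at hk
        rw [inner j k (by omega) x]
        ring

theorem stmt_4 (i j : ℕ) (x : ℝ) (hx : 0 < x) :
    ∑ k ∈ Finset.range (j + 1), ((i + k).choose i : ℝ) * (j.choose k : ℝ) * x ^ (k + i) =
      (x ^ i / (i.factorial : ℝ)) * ∑ k ∈ Finset.range (min i j + 1),
        (i.choose k : ℝ) * (1 + x) ^ (j - k) * x ^ k *
          ((j.factorial : ℝ) / ((j - k).factorial : ℝ)) *
          ((i.factorial : ℝ) / (k.factorial : ℝ)) := by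
  have hL : ∑ k ∈ Finset.range (j + 1), ((i + k).choose i : ℝ) * (j.choose k : ℝ) * x ^ (k + i)
      = (∑ n ∈ range (j + 1), ((i + n).choose i : ℝ) * (j.choose n : ℝ) * x ^ n) * x ^ i := by
    rw [Finset.sum_mul]
    refine sum_congr rfl fun k _ => by rw [pow_add]; ring
  have hR : (x ^ i / (i.factorial : ℝ)) * ∑ k ∈ Finset.range (min i j + 1),
        (i.choose k : ℝ) * (1 + x) ^ (j - k) * x ^ k *
          ((j.factorial : ℝ) / ((j - k).factorial : ℝ)) *
          ((i.factorial : ℝ) / (k.factorial : ℝ))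
      = (∑ k ∈ range (j + 1), ((i.choose k : ℝ) * (j.choose k : ℝ)) * x ^ k * (1 + x) ^ (j - k)) * x ^ i := by
    rw [Finset.mul_sum, Finset.sum_mul]
    have hext : ∑ k ∈ range (min i j + 1),
        (x ^ i / (i.factorial : ℝ)) * ((i.choose k : ℝ) * (1 + x) ^ (j - k) * x ^ k *
          ((j.factorial : ℝ) / ((j - k).factorial : ℝ)) * ((i.factorial : ℝ) / (k.factorial : ℝ)))
        = ∑ k ∈ range (j + 1),
        (x ^ i / (i.factorial : ℝ)) * ((i.choose k : ℝ) * (1 + x) ^ (j - k) * x ^ k *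
          ((j.factorial : ℝ) / ((j - k).factorial : ℝ)) * ((i.factorial : ℝ) / (k.factorial : ℝ))) := by
      apply Finset.sum_subset (by intro a ha; simp at *; omega)
      intro k hk hk'
      simp only [mem_range] at hk hk'
      have : i < k := by omega
      rw [Nat.choose_eq_zero_of_lt this]
      push_cast; ring
    rw [hext]
    refine sum_congr rfl fun k hk => ?_
    simp only [mem_range] at hk
    have hkj : k ≤ j := by omega
    have hfac : (j.factorial : ℝ) = (j.choose k : ℝ) * (k.factorial : ℝ) * ((j - k).factorial : ℝ) := by
      exact_mod_cast congrArg (Nat.cast : ℕ → ℝ) (Nat.choose_mul_factorial_mul_factorial hkj).symm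
    have h1 : ((j - k).factorial : ℝ) ≠ 0 := Nat.cast_ne_zero.2 (Nat.factorial_ne_zero _)
    have h2 : (k.factorial : ℝ) ≠ 0 := Nat.cast_ne_zero.2 (Nat.factorial_ne_zero _)
    have h3 : (i.factorial : ℝ) ≠ 0 := Nat.cast_ne_zero.2 (Nat.factorial_ne_zero _)
    rw [hfac]
    field_simp
  rw [hL, hR, main]
end

section
/- For every i ∈ {1,…,W}, ∑_{k=1}^{W} C(k,i) (−q/p)^k d_k = (−q)^i η θ_i. -/
open Finset

lemma alt0 (n : ℕ) : ∑ j ∈ range (n+1), (-1:ℝ)^j * (n.choose j) = if n = 0 then 1 else 0 := by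
  have h := Int.alternating_sum_range_choose (n := n)
  have h2 : ((∑ i ∈ range (n+1), (-1:ℤ)^i * n.choose i : ℤ) : ℝ)
      = ((if n = 0 then 1 else 0 : ℤ) : ℝ) := by rw [h]
  push_cast at h2
  simpa using h2

lemma alt_sum (i m : ℕ) :
    ∑ k ∈ Icc i m, ((k.choose i : ℝ) * (m.choose k) * (-1)^k)
      = if m = i then (-1)^i else 0 := by
  rcases lt_or_ge m i with h | h
  · rw [Finset.Icc_eq_empty (by omega), sum_empty, if_neg (by omega)]
  · have hIc : Icc i m = Ico i (m + 1) := rfl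
    rw [hIc, Finset.sum_Ico_eq_sum_range]
    have hmi : m + 1 - i = (m - i) + 1 := by omega
    rw [hmi]
    have key : ∀ j ∈ range (m - i + 1),
        ((i+j).choose i : ℝ) * (m.choose (i+j)) * (-1)^(i+j)
          = (m.choose i : ℝ) * ((-1)^i * ((-1)^j * ((m-i).choose j))) := by
      intro j hj
      have h1 : i + j ≤ m := by
        have := Nat.lt_succ_iff.mp (mem_range.mp hj); omega
      have hce := Nat.choose_mul (n := m) (Nat.le_add_right i j)
      have hs : i + j - i = j := by omega
      rw [hs] at hce
      have hcast : ((m.choose (i+j)) : ℝ) * ((i+j).choose i)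
          = (m.choose i : ℝ) * ((m-i).choose j) := by exact_mod_cast hce
      rw [pow_add, show ((i+j).choose i : ℝ) * (m.choose (i+j))
          = (m.choose (i+j) : ℝ) * ((i+j).choose i) from mul_comm _ _, hcast]
      ring
    rw [Finset.sum_congr rfl key]
    rw [← Finset.mul_sum, ← Finset.mul_sum, alt0 (m - i)]
    rcases eq_or_lt_of_le h with he | hlt
    · subst he
      simp
    · rw [if_neg (by omega), if_neg (by omega), mul_zero, mul_zero]

theorem stmt_9
    (W : ℕ) (hW : 1 ≤ W) (p q : ℝ) (hp0 : 0 < p) (hp1 : p < 1) (hq : q = 1 - p)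
    (B : ℕ → ℕ → ℝ)
    (hB : ∀ j i, B j i = if j ≤ i then
      (i.choose j : ℝ) * p ^ j * q ^ (i - j) / (1 - q ^ i) else 0)
    (φ : ℕ → ℝ) (hφ : ∀ i ∈ Finset.Icc 1 W, 0 < φ i)
    (d : ℕ → ℝ) (hd : ∀ k, d k = ∑ i ∈ Finset.Icc k W, B k i * φ i)
    (η : ℝ) (hη : η = ∑ k ∈ Finset.Icc 1 W, φ k / (1 - q ^ k))
    (θ : ℕ → ℝ) (hθ : ∀ i, θ i = φ i / (η * (1 - q ^ i)))
    : ∀ i ∈ Finset.Icc 1 W,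
      ∑ k ∈ Finset.Icc 1 W, (k.choose i : ℝ) * (-q / p) ^ k * d k = (-q) ^ i * η * θ i := by
  have hq0 : 0 < q := by rw [hq]; linarith
  have hq1 : q < 1 := by rw [hq]; linarith
  have h1q : ∀ k : ℕ, 1 ≤ k → 0 < 1 - q ^ k := by
    intro k hk
    have : q ^ k < 1 := pow_lt_one₀ (le_of_lt hq0) hq1 (by omega)
    linarith
  have hηpos : 0 < η := by
    rw [hη]
    apply Finset.sum_pos
    · intro k hk
      have hk1 : 1 ≤ k := (mem_Icc.mp hk).1
      exact div_pos (hφ k hk) (h1q k hk1)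
    · exact ⟨1, mem_Icc.mpr ⟨le_refl 1, hW⟩⟩
  intro i hi
  obtain ⟨hi1, hiW⟩ := mem_Icc.mp hi
  -- compute RHS
  have hRHS : (-q) ^ i * η * θ i = (-1)^i * q ^ i * φ i / (1 - q ^ i) := by
    rw [hθ i]
    have hηne : η ≠ 0 := ne_of_gt hηpos
    have h1qi : (1 - q ^ i) ≠ 0 := ne_of_gt (h1q i hi1)
    field_simp
    ring
  rw [hRHS]
  -- expand d, extend inner sum to Icc 1 W
  have hstep1 : ∀ k ∈ Icc 1 W,
      (k.choose i : ℝ) * (-q / p) ^ k * d k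
        = ∑ m ∈ Icc 1 W, (k.choose i : ℝ) * (-q / p) ^ k * (B k m * φ m) := by
    intro k hk
    obtain ⟨hk1, hkW⟩ := mem_Icc.mp hk
    rw [hd k, Finset.mul_sum]
    apply Finset.sum_subset
    · intro m hm
      obtain ⟨h1, h2⟩ := mem_Icc.mp hm
      exact mem_Icc.mpr ⟨by omega, h2⟩
    · intro m hm hm'
      have : ¬ (k ≤ m) := by
        obtain ⟨h1, h2⟩ := mem_Icc.mp hm
        intro hc; exact hm' (mem_Icc.mpr ⟨hc, h2⟩)
      rw [hB k m, if_neg this]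
      ring
  rw [Finset.sum_congr rfl hstep1, Finset.sum_comm]
  -- now evaluate, for each m, the inner sum over k
  have hstep2 : ∀ m ∈ Icc 1 W,
      ∑ k ∈ Icc 1 W, (k.choose i : ℝ) * (-q / p) ^ k * (B k m * φ m)
        = (if m = i then (-1:ℝ)^i else 0) * (q ^ m * φ m / (1 - q ^ m)) := by
    intro m hm
    obtain ⟨hm1, hmW⟩ := mem_Icc.mp hm
    have hsub : ∑ k ∈ Icc 1 W, (k.choose i : ℝ) * (-q / p) ^ k * (B k m * φ m)
        = ∑ k ∈ Icc i m, (k.choose i : ℝ) * (-q / p) ^ k * (B k m * φ m) := by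
      rw [eq_comm]
      apply Finset.sum_subset
      · intro k hk
        obtain ⟨h1, h2⟩ := mem_Icc.mp hk
        exact mem_Icc.mpr ⟨by omega, by omega⟩
      · intro k hk hk'
        obtain ⟨h1, h2⟩ := mem_Icc.mp hk
        rcases le_or_gt i k with hik | hik
        · -- then k > m, so B k m = 0
          have hkm : ¬ (k ≤ m) := by
            intro hc; exact hk' (mem_Icc.mpr ⟨hik, hc⟩)
          rw [hB k m, if_neg hkm]; ring
        · -- k < i, choose = 0
          rw [Nat.choose_eq_zero_of_lt hik]; push_cast; ring
    rw [hsub]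
    have hterm : ∀ k ∈ Icc i m,
        (k.choose i : ℝ) * (-q / p) ^ k * (B k m * φ m)
          = ((k.choose i : ℝ) * (m.choose k) * (-1)^k) * (q ^ m * φ m / (1 - q ^ m)) := by
      intro k hk
      obtain ⟨h1, h2⟩ := mem_Icc.mp hk
      rw [hB k m, if_pos h2]
      have hp : p ≠ 0 := ne_of_gt hp0
      have hqq : (-q / p) ^ k * p ^ k = (-q) ^ k := by
        rw [div_pow, div_mul_cancel₀]
        exact pow_ne_zero _ hp
      have hqpow : (-q : ℝ) ^ k * q ^ (m - k) = (-1) ^ k * q ^ m := by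
        rw [neg_pow, mul_assoc, ← pow_add]
        congr 2
        omega
      calc (k.choose i : ℝ) * (-q / p) ^ k * ((m.choose k : ℝ) * p ^ k * q ^ (m - k) / (1 - q ^ m) * φ m)
          = (k.choose i : ℝ) * (m.choose k) * ((-q / p) ^ k * p ^ k) * q ^ (m - k) * φ m / (1 - q ^ m) := by ring
        _ = (k.choose i : ℝ) * (m.choose k) * ((-q) ^ k * q ^ (m - k)) * φ m / (1 - q ^ m) := by rw [hqq]; ring
        _ = (k.choose i : ℝ) * (m.choose k) * (-1) ^ k * (q ^ m * φ m / (1 - q ^ m)) := by rw [hqpow]; ring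
    rw [Finset.sum_congr rfl hterm, ← Finset.sum_mul, alt_sum i m]
  rw [Finset.sum_congr rfl hstep2]
  rw [Finset.sum_eq_single i]
  · rw [if_pos rfl]; ring
  · intro m hm hmi
    rw [if_neg hmi, zero_mul]
  · intro hii; exact absurd hi hii
end

section
/- ∑_{k=1}^{W} (q/p)^{2k} d_k = η ( ∑_{j=1}^W (q/p)^j θ_j − ∑_{j=1}^W q^j θ_j ). -/
open Finset

theorem stmt_10
    (W : ℕ) (hW : 1 ≤ W) (p q : ℝ) (hp0 : 0 < p) (hp1 : p < 1) (hq : q = 1 - p)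
    (B : ℕ → ℕ → ℝ)
    (hB : ∀ j i, B j i = if j ≤ i then
      (i.choose j : ℝ) * p ^ j * q ^ (i - j) / (1 - q ^ i) else 0)
    (φ : ℕ → ℝ) (hφ : ∀ i ∈ Finset.Icc 1 W, 0 < φ i)
    (d : ℕ → ℝ) (hd : ∀ k, d k = ∑ i ∈ Finset.Icc k W, B k i * φ i)
    (η : ℝ) (hη : η = ∑ k ∈ Finset.Icc 1 W, φ k / (1 - q ^ k))
    (θ : ℕ → ℝ) (hθ : ∀ i, θ i = φ i / (η * (1 - q ^ i)))
    : ∑ k ∈ Finset.Icc 1 W, (q / p) ^ (2 * k) * d k =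
      η * (∑ j ∈ Finset.Icc 1 W, (q / p) ^ j * θ j - ∑ j ∈ Finset.Icc 1 W, q ^ j * θ j) := by
  have hp : p ≠ 0 := ne_of_gt hp0
  have hq0 : 0 < q := by rw [hq]; linarith
  have hq1 : q < 1 := by rw [hq]; linarith
  have hpq : p + q = 1 := by rw [hq]; ring
  have hden : ∀ i ∈ Finset.Icc 1 W, (0:ℝ) < 1 - q ^ i := by
    intro i hi
    simp only [mem_Icc] at hi
    have : q ^ i < 1 := pow_lt_one₀ hq0.le hq1 (by omega)
    linarith
  have hηpos : 0 < η := by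
    rw [hη]
    apply Finset.sum_pos
    · intro i hi
      exact div_pos (hφ i hi) (hden i hi)
    · exact ⟨1, by simp only [mem_Icc]; omega⟩
  have hRHS : η * (∑ j ∈ Finset.Icc 1 W, (q / p) ^ j * θ j -
        ∑ j ∈ Finset.Icc 1 W, q ^ j * θ j)
      = ∑ j ∈ Finset.Icc 1 W, ((q/p)^j - q^j) * (φ j / (1 - q^j)) := by
    rw [← Finset.sum_sub_distrib, Finset.mul_sum]
    refine Finset.sum_congr rfl fun j hj => ?_
    rw [hθ j]
    have h1 : (1 - q^j) ≠ 0 := ne_of_gt (hden j hj)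
    field_simp
  rw [hRHS]
  -- LHS
  have hswap : ∑ k ∈ Finset.Icc 1 W, (q / p) ^ (2 * k) * d k
      = ∑ i ∈ Finset.Icc 1 W, ∑ k ∈ Finset.Icc 1 i, (q/p)^(2*k) * (B k i * φ i) := by
    simp only [hd, Finset.mul_sum]
    exact Finset.sum_comm' (by intro k i; simp only [mem_Icc]; omega)
  rw [hswap]
  refine Finset.sum_congr rfl fun i hi => ?_
  simp only [mem_Icc] at hi
  have hdi : (1 - q^i) ≠ 0 := ne_of_gt (hden i (by simp [mem_Icc]; omega))
  -- binomial sum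
  have hbin : ∑ k ∈ Finset.range (i+1), (q^2/p)^k * q^(i-k) * (i.choose k : ℝ)
      = (q/p)^i := by
    rw [← add_pow]
    congr 1
    field_simp
    nlinarith [hpq]
  have hins : Finset.range (i+1) = insert 0 (Finset.Icc 1 i) := by
    ext x; simp only [Finset.mem_range, Finset.mem_insert, mem_Icc]; omega
  rw [hins, Finset.sum_insert (by simp)] at hbin
  simp only [pow_zero, Nat.choose_zero_right, Nat.cast_one, one_mul, mul_one, Nat.sub_zero] at hbin
  have hsum : ∑ k ∈ Finset.Icc 1 i, (q^2/p)^k * q^(i-k) * (i.choose k : ℝ)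
      = (q/p)^i - q^i := by linarith
  calc ∑ k ∈ Finset.Icc 1 i, (q/p)^(2*k) * (B k i * φ i)
      = ∑ k ∈ Finset.Icc 1 i, ((q^2/p)^k * q^(i-k) * (i.choose k : ℝ)) * (φ i / (1 - q^i)) := by
        refine Finset.sum_congr rfl fun k hk => ?_
        simp only [mem_Icc] at hk
        rw [hB k i, if_pos hk.2]
        have : (q/p)^(2*k) * p^k = (q^2/p)^k := by
          rw [div_pow, div_pow, pow_mul]
          field_simp
          ring
        rw [← this]
        ring
    _ = ((q/p)^i - q^i) * (φ i / (1 - q^i)) := by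
        rw [← Finset.sum_mul, hsum]
end

section
/- ∑_{i=1}^W i·φ_i = (1/p) ∑_{k=1}^W k·d_k + (1 − 1/p)·d_1. -/
open Finset

lemma keysum16 (n : ℕ) (p q : ℝ) :
    ∑ k ∈ Icc 1 (n+1), (k:ℝ) * ((n+1).choose k : ℝ) * p^k * q^(n+1-k)
      = ((n:ℝ)+1) * p * (p+q)^n := by
  have h1 : Icc 1 (n+1) = Ico 1 (n+2) := by exact (Finset.Ico_add_one_right_eq_Icc ..).symm
  rw [h1, Finset.sum_Ico_eq_sum_range]
  have h2 : n + 2 - 1 = n + 1 := rfl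
  rw [h2, add_pow, Finset.mul_sum]
  apply Finset.sum_congr rfl
  intro j hj
  have hjn : j ≤ n := Nat.lt_succ_iff.mp (Finset.mem_range.mp hj)
  have hcast : ((1+j:ℕ):ℝ) * ((n+1).choose (1+j) : ℝ) = ((n:ℝ)+1) * (n.choose j : ℝ) := by
    have h := Nat.add_one_mul_choose_eq n j
    have : ((n+1) * n.choose j : ℕ) = ((n+1).choose (j+1) * (j+1) : ℕ) := h
    have := congrArg (Nat.cast : ℕ → ℝ) this
    push_cast at this
    rw [Nat.add_comm 1 j]
    push_cast
    linarith [this]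
  have hsub : n + 1 - (1 + j) = n - j := by omega
  rw [hsub, hcast]
  have hp : p ^ (1+j) = p * p ^ j := by rw [pow_add, pow_one]
  rw [hp]
  ring

theorem stmt_16
    (W : ℕ) (hW : 1 ≤ W) (p q : ℝ) (hp0 : 0 < p) (hp1 : p < 1) (hq : q = 1 - p)
    (B : ℕ → ℕ → ℝ)
    (hB : ∀ j i, B j i = if j ≤ i then
      (i.choose j : ℝ) * p ^ j * q ^ (i - j) / (1 - q ^ i) else 0)
    (φ : ℕ → ℝ) (hφ : ∀ i ∈ Finset.Icc 1 W, 0 < φ i)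
    (d : ℕ → ℝ) (hd : ∀ k, d k = ∑ i ∈ Finset.Icc k W, B k i * φ i)
    : ∑ i ∈ Finset.Icc 1 W, (i : ℝ) * φ i =
      (1 / p) * ∑ k ∈ Finset.Icc 1 W, (k : ℝ) * d k + (1 - 1 / p) * d 1 := by
  have hq0 : 0 < q := by rw [hq]; linarith
  have hq1 : q < 1 := by rw [hq]; linarith
  rw [hd 1]
  have hrw : ∀ k ∈ Icc 1 W, (k:ℝ) * d k = ∑ i ∈ Icc k W, (k:ℝ) * (B k i * φ i) := by
    intro k _; rw [hd k, Finset.mul_sum]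
  rw [Finset.sum_congr rfl hrw]
  have hswap : ∑ k ∈ Icc 1 W, ∑ i ∈ Icc k W, (k:ℝ) * (B k i * φ i)
      = ∑ i ∈ Icc 1 W, ∑ k ∈ Icc 1 i, (k:ℝ) * (B k i * φ i) := by
    have h := Finset.sum_Ico_Ico_comm 1 (W+1) (fun k i => (k:ℝ) * (B k i * φ i))
    simpa [Finset.Ico_add_one_right_eq_Icc] using h
  rw [hswap, Finset.mul_sum, Finset.mul_sum, ← Finset.sum_add_distrib]
  apply Finset.sum_congr rfl
  intro i hi
  obtain ⟨hi1, hiW⟩ := Finset.mem_Icc.mp hi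
  obtain ⟨n, rfl⟩ : ∃ n, i = n + 1 := ⟨i - 1, by omega⟩
  have hqi : q ^ (n+1) < 1 := pow_lt_one₀ hq0.le hq1 (by omega)
  have hne : (1:ℝ) - q ^ (n+1) ≠ 0 := by linarith
  have hsum : ∑ k ∈ Icc 1 (n+1), (k:ℝ) * (B k (n+1) * φ (n+1))
      = (((n:ℝ)+1) * p / (1 - q^(n+1))) * φ (n+1) := by
    have : ∀ k ∈ Icc 1 (n+1), (k:ℝ) * (B k (n+1) * φ (n+1))
        = ((k:ℝ) * ((n+1).choose k : ℝ) * p^k * q^(n+1-k)) * (φ (n+1) / (1 - q^(n+1))) := by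
      intro k hk
      obtain ⟨hk1, hk2⟩ := Finset.mem_Icc.mp hk
      rw [hB k (n+1), if_pos hk2]
      field_simp
    rw [Finset.sum_congr rfl this, ← Finset.sum_mul, keysum16 n p q]
    have hpq : p + q = 1 := by rw [hq]; ring
    rw [hpq, one_pow, mul_one]
    field_simp
  rw [hsum, hB 1 (n+1), if_pos (by omega : 1 ≤ n+1)]
  have hch : ((n+1).choose 1 : ℝ) = (n:ℝ)+1 := by
    rw [Nat.choose_one_right]; push_cast; ring
  have hsub1 : n + 1 - 1 = n := rfl
  rw [hch, hsub1, pow_one]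
  have hqpow : q ^ (n+1) = q ^ n * q := pow_succ q n
  field_simp
  rw [hqpow, hq]
  push_cast; ring
end
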